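/- Sub/supersolution minimizer lemma on finite graphs: let f : V × ℝ → ℝ be continuous, φ₁ ≤ φ₂ be a subsolution and a supersolution of -Δu = f(x, u) respectively (i.e., -Δφ₁(x) ≤ f(x, φ₁(x)) and -Δφ₂(x) ≥ f(x, φ₂(x)) for all x). Then any minimizer u of the functional J(u) = Σ_V ((1/2)|∇u|² - F(x, u(x))) over the set {u : φ₁ ≤ u ≤ φ₂}, where ∂F/∂u = f, solves -Δu = f(x, u). -/

import Mathlib

/-- The weighted graph Laplacian. -/
noncomputable def graphLap {V : Type*} [Fintype V] (m : V → ℝ) (ω : V → V → ℝ)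
    (u : V → ℝ) (x : V) : ℝ :=
  (1 / m x) * ∑ y, ω x y * (u y - u x)

/-- The energy functional J(u) = Σ_V ((1/2)|∇u|² - F(x, u(x))), where
|∇u|²(x) = (1/(2m(x))) Σ_y ω_{xy}(u(y)-u(x))² and F(x,s) = ∫₀^s f(x,t) dt. -/
noncomputable def graphEnergy {V : Type*} [Fintype V] (m : V → ℝ)
    (ω : V → V → ℝ) (f : V → ℝ → ℝ) (u : V → ℝ) : ℝ :=
  ∑ x, m x * ((1 / 2) * ((1 / (2 * m x)) * ∑ y, ω x y * (u y - u x) ^ 2)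
      - ∫ t in (0 : ℝ)..(u x), f x t)

open Filter Set Topology

lemma energy_hasDerivAt {V : Type*} [Fintype V] [DecidableEq V]
    (m : V → ℝ) (ω : V → V → ℝ) (hm : ∀ x, 0 < m x) (hsym : ∀ x y, ω x y = ω y x)
    (f : V → ℝ → ℝ) (hf : ∀ x, Continuous (f x)) (u : V → ℝ) (x₀ : V) :
    HasDerivAt
      (fun t => graphEnergy m ω f (fun z => u z + t * (if z = x₀ then 1 else 0)))
      (m x₀ * (-graphLap m ω u x₀ - f x₀ (u x₀))) 0 := by
  set d : V → ℝ := fun z => if z = x₀ then 1 else 0 with hd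
  -- derivative of each summand
  have key : ∀ x : V, HasDerivAt
      (fun t => m x * ((1 / 2) * ((1 / (2 * m x)) *
          ∑ y, ω x y * ((u y + t * d y) - (u x + t * d x)) ^ 2)
        - ∫ s in (0:ℝ)..(u x + t * d x), f x s))
      (m x * ((1 / 2) * ((1 / (2 * m x)) *
          ∑ y, ω x y * (2 * (u y - u x) * (d y - d x)))
        - f x (u x) * d x)) 0 := by
    intro x
    have haff : HasDerivAt (fun t : ℝ => u x + t * d x) (d x) 0 := by
      simpa using ((hasDerivAt_id (0:ℝ)).mul_const (d x)).const_add (u x)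
    have hquad : ∀ y : V, HasDerivAt
        (fun t : ℝ => ω x y * ((u y + t * d y) - (u x + t * d x)) ^ 2)
        (ω x y * (2 * (u y - u x) * (d y - d x))) 0 := by
      intro y
      have haffy : HasDerivAt (fun t : ℝ => u y + t * d y) (d y) 0 := by
        simpa using ((hasDerivAt_id (0:ℝ)).mul_const (d y)).const_add (u y)
      have h1 : HasDerivAt (fun t : ℝ => (u y + t * d y) - (u x + t * d x))
          (d y - d x) 0 := haffy.sub haff
      have h2 := (h1.pow 2).const_mul (ω x y)
      simpa [mul_comm, mul_assoc, mul_left_comm] using h2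
    have hsum : HasDerivAt
        (fun t : ℝ => ∑ y, ω x y * ((u y + t * d y) - (u x + t * d x)) ^ 2)
        (∑ y, ω x y * (2 * (u y - u x) * (d y - d x))) 0 :=
      HasDerivAt.fun_sum (fun y _ => hquad y)
    have hint : HasDerivAt (fun t : ℝ => ∫ s in (0:ℝ)..(u x + t * d x), f x s)
        (f x (u x) * d x) 0 := by
      have hF : HasDerivAt (fun s : ℝ => ∫ t' in (0:ℝ)..s, f x t') (f x (u x)) (u x) :=
        ((hf x).integral_hasStrictDerivAt 0 (u x)).hasDerivAt
      have hF' : HasDerivAt (fun s : ℝ => ∫ t' in (0:ℝ)..s, f x t') (f x (u x))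
          (u x + 0 * d x) := by simpa using hF
      exact hF'.comp 0 haff
    exact (((hsum.const_mul ((1:ℝ)/(2*m x))).const_mul ((1:ℝ)/2)).sub hint).const_mul (m x)
  have H := HasDerivAt.fun_sum (fun x (_ : x ∈ Finset.univ) => key x)
  have hD : ∑ x, (m x * ((1 / 2) * ((1 / (2 * m x)) *
          ∑ y, ω x y * (2 * (u y - u x) * (d y - d x)))
        - f x (u x) * d x))
      = m x₀ * (-graphLap m ω u x₀ - f x₀ (u x₀)) := by
    have step1 : ∀ x : V, m x * ((1 / 2) * ((1 / (2 * m x)) *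
          ∑ y, ω x y * (2 * (u y - u x) * (d y - d x)))
        - f x (u x) * d x)
        = (1/4) * (∑ y, ω x y * (2 * (u y - u x) * (d y - d x)))
          - m x * f x (u x) * d x := by
      intro x
      have hx := (hm x).ne'
      field_simp
      ring
    rw [Finset.sum_congr rfl (fun x _ => step1 x), Finset.sum_sub_distrib]
    have h2 : ∑ x, m x * f x (u x) * d x = m x₀ * f x₀ (u x₀) := by
      simp [hd, mul_ite]
    have h3 : ∀ x : V, (1/4 : ℝ) * (∑ y, ω x y * (2 * (u y - u x) * (d y - d x)))
        = (1/2) * (ω x x₀ * (u x₀ - u x)) - (1/2) * (d x * ∑ y, ω x y * (u y - u x)) := by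
      intro x
      have e : ∀ y : V, ω x y * (2 * (u y - u x) * (d y - d x))
          = 2 * ((ω x y * (u y - u x)) * d y) - 2 * (d x * (ω x y * (u y - u x))) := by
        intro y; ring
      rw [Finset.sum_congr rfl (fun y _ => e y), Finset.sum_sub_distrib]
      have e1 : ∑ y, 2 * ((ω x y * (u y - u x)) * d y) = 2 * (ω x x₀ * (u x₀ - u x)) := by
        simp [hd, mul_ite]
      have e2 : ∑ y, 2 * (d x * (ω x y * (u y - u x)))
          = 2 * (d x * ∑ y, ω x y * (u y - u x)) := by
        rw [Finset.mul_sum]; rw [Finset.mul_sum]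
      rw [e1, e2]; ring
    rw [Finset.sum_congr rfl (fun x _ => h3 x), Finset.sum_sub_distrib, h2]
    have h4 : ∑ x, (1/2 : ℝ) * (ω x x₀ * (u x₀ - u x))
        = -(1/2) * ∑ y, ω x₀ y * (u y - u x₀) := by
      rw [Finset.mul_sum]
      exact Finset.sum_congr rfl fun x _ => by rw [hsym x x₀]; ring
    have h5 : ∑ x, (1/2 : ℝ) * (d x * ∑ y, ω x y * (u y - u x))
        = (1/2) * ∑ y, ω x₀ y * (u y - u x₀) := by
      simp [hd, ite_mul, mul_ite]
    rw [h4, h5, graphLap]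
    have hx := (hm x₀).ne'
    field_simp
    ring
  rw [hD] at H
  exact H


/-- a minimizer of J between a subsolution and a supersolution
solves -Δu = f(x, u). -/
theorem sub_supersolution_minimizer {V : Type*} [Fintype V] [Nonempty V]
    (m : V → ℝ) (ω : V → V → ℝ)
    (hm : ∀ x, 0 < m x) (hsym : ∀ x y, ω x y = ω y x)
    (hnn : ∀ x y, 0 ≤ ω x y)
    (hconn : ∀ x y : V, Relation.ReflTransGen (fun a b => 0 < ω a b) x y)
    (f : V → ℝ → ℝ) (hf : ∀ x, Continuous (f x))
    (φ₁ φ₂ : V → ℝ) (hle : ∀ x, φ₁ x ≤ φ₂ x)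
    (hsub : ∀ x, -graphLap m ω φ₁ x ≤ f x (φ₁ x))
    (hsuper : ∀ x, -graphLap m ω φ₂ x ≥ f x (φ₂ x))
    (u : V → ℝ)
    (hmem : ∀ x, φ₁ x ≤ u x ∧ u x ≤ φ₂ x)
    (hmin : ∀ v : V → ℝ, (∀ x, φ₁ x ≤ v x ∧ v x ≤ φ₂ x) →
        graphEnergy m ω f u ≤ graphEnergy m ω f v) :
    ∀ x, -graphLap m ω u x = f x (u x) := by
  classical
  intro x₀
  set d : V → ℝ := fun z => if z = x₀ then 1 else 0 with hd
  set g : ℝ → ℝ := fun t => graphEnergy m ω f (fun z => u z + t * d z) with hg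
  set D : ℝ := m x₀ * (-graphLap m ω u x₀ - f x₀ (u x₀)) with hD
  have H : HasDerivAt g D 0 := energy_hasDerivAt m ω hm hsym f hf u x₀
  have Hslope : Tendsto (slope g 0) (𝓝[≠] (0:ℝ)) (𝓝 D) :=
    hasDerivAt_iff_tendsto_slope.mp H
  have hg0 : g 0 = graphEnergy m ω f u := by
    have : (fun z => u z + 0 * d z) = u := by funext z; ring
    simp only [hg, this]
  have hadm : ∀ t : ℝ, φ₁ x₀ ≤ u x₀ + t → u x₀ + t ≤ φ₂ x₀ →
      ∀ z, φ₁ z ≤ u z + t * d z ∧ u z + t * d z ≤ φ₂ z := by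
    intro t h1 h2 z
    by_cases hz : z = x₀
    · subst hz; simp only [hd, if_pos rfl, mul_one]
      constructor
      · linarith [h1]
      · linarith [h2]
    · simp only [hd, if_neg hz, mul_zero, add_zero]
      exact hmem z
  have hmemslope : ∀ t : ℝ, t ≠ 0 → φ₁ x₀ ≤ u x₀ + t → u x₀ + t ≤ φ₂ x₀ →
      0 ≤ g t - g 0 := by
    intro t _ h1 h2
    have := hmin _ (hadm t h1 h2)
    rw [hg0]
    linarith [this]
  have upper : -graphLap m ω u x₀ ≤ f x₀ (u x₀) := by
    rcases eq_or_lt_of_le (hmem x₀).1 with heq | hlt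
    · -- u touches φ₁ at x₀: comparison argument
      have hsumle : ∑ y, ω x₀ y * (φ₁ y - φ₁ x₀) ≤ ∑ y, ω x₀ y * (u y - u x₀) := by
        apply Finset.sum_le_sum
        intro y _
        apply mul_le_mul_of_nonneg_left _ (hnn x₀ y)
        have := (hmem y).1
        rw [← heq]
        linarith
      have hmpos : (0:ℝ) ≤ 1 / m x₀ := one_div_nonneg.mpr (hm x₀).le
      have : -graphLap m ω u x₀ ≤ -graphLap m ω φ₁ x₀ := by
        rw [graphLap, graphLap, neg_le_neg_iff]
        exact mul_le_mul_of_nonneg_left hsumle hmpos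
      calc -graphLap m ω u x₀ ≤ -graphLap m ω φ₁ x₀ := this
        _ ≤ f x₀ (φ₁ x₀) := hsub x₀
        _ = f x₀ (u x₀) := by rw [heq]
    · -- room below: left perturbations give D ≤ 0
      have hDle : D ≤ 0 := by
        have hmem' : Ico (φ₁ x₀ - u x₀) 0 ∈ 𝓝[<] (0:ℝ) :=
          Ico_mem_nhdsLT (by linarith)
        have hEv : ∀ᶠ t in 𝓝[<] (0:ℝ), slope g 0 t ≤ 0 := by
          filter_upwards [hmem', self_mem_nhdsWithin] with t ht ht0
          have ht0' : t < 0 := ht0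
          have hnum : 0 ≤ g t - g 0 :=
            hmemslope t (ne_of_lt ht0') (by linarith [ht.1])
              (by linarith [(hmem x₀).2])
          rw [slope_def_field]
          have : t - 0 < 0 := by linarith
          exact div_nonpos_iff.mpr (Or.inl ⟨hnum, le_of_lt this⟩)
        exact le_of_tendsto
          (Hslope.mono_left (nhdsWithin_mono _ (show Iio (0:ℝ) ⊆ {(0:ℝ)}ᶜ from fun t ht => ne_of_lt ht))) hEv
      rw [hD] at hDle
      nlinarith [hm x₀]
  have lower : f x₀ (u x₀) ≤ -graphLap m ω u x₀ := by
    rcases eq_or_lt_of_le (hmem x₀).2 with heq | hlt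
    · have hsumle : ∑ y, ω x₀ y * (u y - u x₀) ≤ ∑ y, ω x₀ y * (φ₂ y - φ₂ x₀) := by
        apply Finset.sum_le_sum
        intro y _
        apply mul_le_mul_of_nonneg_left _ (hnn x₀ y)
        have := (hmem y).2
        rw [heq]
        linarith
      have hmpos : (0:ℝ) ≤ 1 / m x₀ := one_div_nonneg.mpr (hm x₀).le
      have hcmp : -graphLap m ω φ₂ x₀ ≤ -graphLap m ω u x₀ := by
        rw [graphLap, graphLap, neg_le_neg_iff]
        exact mul_le_mul_of_nonneg_left hsumle hmpos
      calc f x₀ (u x₀) = f x₀ (φ₂ x₀) := by rw [heq]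
        _ ≤ -graphLap m ω φ₂ x₀ := hsuper x₀
        _ ≤ -graphLap m ω u x₀ := hcmp
    · have hDge : 0 ≤ D := by
        have hmem' : Ioc (0:ℝ) (φ₂ x₀ - u x₀) ∈ 𝓝[>] (0:ℝ) :=
          Ioc_mem_nhdsGT (by linarith)
        have hEv : ∀ᶠ t in 𝓝[>] (0:ℝ), 0 ≤ slope g 0 t := by
          filter_upwards [hmem'] with t ht
          have ht0' : 0 < t := ht.1
          have hnum : 0 ≤ g t - g 0 :=
            hmemslope t (ne_of_gt ht0') (by linarith [(hmem x₀).1])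
              (by linarith [ht.2])
          rw [slope_def_field]
          exact div_nonneg hnum (by linarith)
        exact ge_of_tendsto
          (Hslope.mono_left (nhdsWithin_mono _ (show Ioi (0:ℝ) ⊆ {(0:ℝ)}ᶜ from fun t ht => ne_of_gt ht))) hEv
      rw [hD] at hDge
      nlinarith [hm x₀]
  linarith
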